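/- Composing doctor-proposing Gale–Shapley with strictly individually fair hospital preferences does not guarantee fairness: there exist finite sets D, H with |D| = |H| = 3, a partition of D into clusters, strict doctor preference orders on H, probabilistic hospital preferences (one distribution over strict linear orders on D per hospital, sampled independently across hospitals) each of which is strictly individually fair with respect to the partition, and a function f mapping each preference profile in the support of the product distribution to the doctor-optimal stable matching of that profile, such that the probabilistic allocation obtained as the pushforward of the product distribution under f is not PIIF with respect to the proto-metric induced by the partition. -/
import Mathlib


open Finset

/-- A probabilistic allocation: a finitely supported probability distribution over
matchings (bijections between doctors `D` and hospitals `H`). -/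
def IsAlloc {D H : Type*} [Fintype D] [Fintype H] [DecidableEq D] [DecidableEq H]
    (π : (D ≃ H) → ℝ) : Prop :=
  (∀ m, 0 ≤ π m) ∧ (∑ m : D ≃ H, π m) = 1

/-- The prospect of doctor `i` under the allocation `π`: the probability that `i`
is matched to hospital `h`. -/
def prospect {D H : Type*} [Fintype D] [Fintype H] [DecidableEq D] [DecidableEq H]
    (π : (D ≃ H) → ℝ) (i : D) (h : H) : ℝ :=
  ∑ m : D ≃ H, if m i = h then π m else 0

/-- `p` is a probability distribution on `H`. -/
def IsDist {H : Type*} [Fintype H] (p : H → ℝ) : Prop :=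
  (∀ h, 0 ≤ p h) ∧ (∑ h : H, p h) = 1

/-- Total variation distance between two distributions on `H`. -/
noncomputable def TV {H : Type*} [Fintype H] (p q : H → ℝ) : ℝ :=
  (1 / 2) * ∑ h : H, |p h - q h|

/-- `p` stochastically dominates `q` with respect to the strict preference relation
`pref` (where `pref x y` means `x` is strictly preferred to `y`): for every `h`, the
probability of an outcome at least as good as `h` under `p` is at least that under `q`. -/
def SDom {H : Type*} [Fintype H] (pref : H → H → Prop) (p q : H → ℝ) : Prop :=
  ∀ h : H,
    (∑ h' : H, Set.indicator {x : H | pref x h ∨ x = h} q h') ≤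
      ∑ h' : H, Set.indicator {x : H | pref x h ∨ x = h} p h'

/-- Preference-informed individual fairness with respect to a (pseudo)metric `d`,
total variation distance, and the doctors' strict preferences `pref`. -/
def PIIF {D H : Type*} [Fintype D] [Fintype H] [DecidableEq D] [DecidableEq H]
    (d : D → D → ℝ) (pref : D → H → H → Prop) (π : (D ≃ H) → ℝ) : Prop :=
  ∀ i j : D, ∃ p : H → ℝ,
    IsDist p ∧ TV p (prospect π j) ≤ d i j ∧ SDom (pref i) (prospect π i) p

/-- PIIF with respect to the proto-metric induced by the cluster map `c`: the prospect
of every doctor stochastically dominates the prospect of every doctor in its cluster. -/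
def ClusterPIIF {D H K : Type*} [Fintype D] [Fintype H] [DecidableEq D] [DecidableEq H]
    (c : D → K) (pref : D → H → H → Prop) (π : (D ≃ H) → ℝ) : Prop :=
  ∀ i j : D, c i = c j → SDom (pref i) (prospect π i) (prospect π j)

/-- A probability distribution `q` over strict linear orders on the doctors
(an order is represented by its rank function, a bijection `σ : D ≃ Fin n` where
`σ i < σ j` means `i` is ranked above `j`) is *strictly individually fair* with
respect to the cluster map `c` if (i) any two doctors in the same cluster have the
same rank distribution, and (ii) for any two distinct clusters, with probability 1
one of them is entirely ranked above the other. -/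
def StrictIF {n : ℕ} {D K : Type*} [Fintype D] [DecidableEq D]
    (c : D → K) (q : (D ≃ Fin n) → ℝ) : Prop :=
  (∀ i j : D, c i = c j → ∀ k : Fin n,
      (∑ σ : D ≃ Fin n, if σ i = k then q σ else 0) =
        (∑ σ : D ≃ Fin n, if σ j = k then q σ else 0)) ∧
  (∀ k1 k2 : K, k1 ≠ k2 →
      (∀ σ : D ≃ Fin n, q σ ≠ 0 → ∀ i j : D, c i = k1 → c j = k2 → σ i < σ j) ∨
      (∀ σ : D ≃ Fin n, q σ ≠ 0 → ∀ i j : D, c i = k1 → c j = k2 → σ j < σ i))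

/-- A matching `m` is stable for the profile given by the doctors' strict preferences
`dpref` and the hospitals' strict orders `R` (rank functions over the doctors):
no doctor–hospital pair prefer each other to their partners. -/
def StableFor {n : ℕ} {D H : Type*} (dpref : D → H → H → Prop)
    (R : H → D ≃ Fin n) (m : D ≃ H) : Prop :=
  ¬ ∃ (i : D) (h : H), dpref i h (m i) ∧ R h i < R h (m.symm h)

/-- `m` is the doctor-optimal stable matching for the given profile. -/
def DoctorOptimalStable {n : ℕ} {D H : Type*} (dpref : D → H → H → Prop)
    (R : H → D ≃ Fin n) (m : D ≃ H) : Prop :=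
  StableFor dpref R m ∧
    ∀ m' : D ≃ H, StableFor dpref R m' → ∀ i : D, m i = m' i ∨ dpref i (m i) (m' i)

section AuxGS

private def pA : Fin 3 ≃ Fin 3 := Equiv.refl _
private def pB : Fin 3 ≃ Fin 3 := Equiv.swap 0 1
private def pC : Fin 3 ≃ Fin 3 := finRotate 3
private def pD : Fin 3 ≃ Fin 3 := Equiv.swap 0 2

private def drkF : Fin 3 → Fin 3 ≃ Fin 3 := ![finRotate 3, Equiv.swap 0 2, Equiv.swap 1 2]

private noncomputable def qF : Fin 3 → (Fin 3 ≃ Fin 3) → ℝ := fun h σ =>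
  if h = 2 then (if σ = pC ∨ σ = pD then 1/2 else 0)
  else (if σ = pA ∨ σ = pB then 1/2 else 0)

private def fF : (Fin 3 → Fin 3 ≃ Fin 3) → Fin 3 ≃ Fin 3 := fun R =>
  if R 2 = pC then Equiv.swap 0 2 else 1

private lemma sum_two {α : Type*} [Fintype α] [DecidableEq α] (a b : α) (hab : a ≠ b)
    (F : α → ℝ) :
    ∑ x : α, (if x = a ∨ x = b then F x else 0) = F a + F b := by
  have key : ∀ x : α, (if x = a ∨ x = b then F x else 0)
      = (if x = a then F x else 0) + (if x = b then F x else 0) := by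
    intro x
    by_cases h1 : x = a
    · subst h1; simp [hab]
    · by_cases h2 : x = b
      · subst h2; simp [h1]
      · simp [h1, h2]
  rw [Finset.sum_congr rfl (fun x _ => key x), Finset.sum_add_distrib]
  simp

private lemma sum_if_support {α : Type*} [Fintype α] [DecidableEq α] (a b : α) (hab : a ≠ b)
    (G : α → ℝ) (P : α → Prop) [DecidablePred P] :
    ∑ x : α, (if P x then (if x = a ∨ x = b then G x else 0) else 0)
      = (if P a then G a else 0) + (if P b then G b else 0) := by
  have key : ∀ x : α, (if P x then (if x = a ∨ x = b then G x else 0) else 0)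
      = (if x = a ∨ x = b then (if P x then G x else 0) else 0) := by
    intro x
    by_cases h1 : P x <;> by_cases h2 : x = a ∨ x = b <;> simp [h1, h2]
  rw [Finset.sum_congr rfl (fun x _ => key x), sum_two a b hab]

private lemma qF_support {h : Fin 3} {σ : Fin 3 ≃ Fin 3} (hσ : qF h σ ≠ 0) :
    (h = 2 → σ = pC ∨ σ = pD) ∧ (h ≠ 2 → σ = pA ∨ σ = pB) := by
  unfold qF at hσ
  by_cases h2 : h = 2 <;> simp [h2] at hσ ⊢ <;>
    · by_contra hcon
      push_neg at hcon
      simp [hcon.1, hcon.2] at hσ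

private lemma prospect_eq (i h : Fin 3) :
    prospect (fun m : Fin 3 ≃ Fin 3 =>
        ∑ R : Fin 3 → Fin 3 ≃ Fin 3,
          if fF R = m then ∏ h' : Fin 3, qF h' (R h') else 0) i h
      = ∑ R : Fin 3 → Fin 3 ≃ Fin 3,
          (if (fF R) i = h then ∏ h' : Fin 3, qF h' (R h') else 0) := by
  unfold prospect
  have step1 : ∀ m : Fin 3 ≃ Fin 3,
      (if m i = h then (∑ R : Fin 3 → Fin 3 ≃ Fin 3,
          if fF R = m then ∏ h' : Fin 3, qF h' (R h') else 0) else 0)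
        = ∑ R : Fin 3 → Fin 3 ≃ Fin 3,
            (if m i = h then (if fF R = m then ∏ h' : Fin 3, qF h' (R h') else 0) else 0) := by
    intro m; split <;> simp
  rw [Finset.sum_congr rfl (fun m _ => step1 m), Finset.sum_comm]
  refine Finset.sum_congr rfl (fun R _ => ?_)
  rw [Finset.sum_eq_single (fF R)]
  · simp
  · intro m _ hm
    simp [Ne.symm hm]
  · simp

private lemma prospect_val (i h : Fin 3) :
    (∑ R : Fin 3 → Fin 3 ≃ Fin 3,
        (if (fF R) i = h then ∏ h' : Fin 3, qF h' (R h') else 0))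
      = (if (Equiv.swap 0 2 : Fin 3 ≃ Fin 3) i = h then (1:ℝ)/2 else 0)
        + (if i = h then (1:ℝ)/2 else 0) := by
  classical
  set q2 : Fin 3 → (Fin 3 ≃ Fin 3) → ℝ := fun h' σ =>
    if h' = 2 then (if (if σ = pC then (Equiv.swap 0 2 : Fin 3 ≃ Fin 3) else 1) i = h
        then qF 2 σ else 0)
    else qF h' σ with hq2
  have step1 : ∀ R : Fin 3 → Fin 3 ≃ Fin 3,
      (if (fF R) i = h then ∏ h' : Fin 3, qF h' (R h') else 0)
        = ∏ h' : Fin 3, q2 h' (R h') := by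
    intro R
    have hf : fF R = if R 2 = pC then (Equiv.swap 0 2 : Fin 3 ≃ Fin 3) else 1 := rfl
    rw [Fin.prod_univ_three, Fin.prod_univ_three, hf]
    by_cases hP : (if R 2 = pC then (Equiv.swap 0 2 : Fin 3 ≃ Fin 3) else 1) i = h <;>
      simp [hq2, hP]
  rw [Finset.sum_congr rfl (fun R _ => step1 R)]
  rw [← Fintype.piFinset_univ, ← Finset.prod_univ_sum]
  rw [Fin.prod_univ_three]
  have e0 : ∑ σ : Fin 3 ≃ Fin 3, q2 0 σ = 1 := by
    have h' : ∀ σ : Fin 3 ≃ Fin 3, q2 0 σ = if σ = pA ∨ σ = pB then (1:ℝ)/2 else 0 := by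
      intro σ; simp [hq2, qF]
    rw [Finset.sum_congr rfl (fun σ _ => h' σ), sum_two pA pB (by decide)]
    norm_num
  have e1 : ∑ σ : Fin 3 ≃ Fin 3, q2 1 σ = 1 := by
    have h' : ∀ σ : Fin 3 ≃ Fin 3, q2 1 σ = if σ = pA ∨ σ = pB then (1:ℝ)/2 else 0 := by
      intro σ; simp [hq2, qF]
    rw [Finset.sum_congr rfl (fun σ _ => h' σ), sum_two pA pB (by decide)]
    norm_num
  have e2 : ∑ σ : Fin 3 ≃ Fin 3, q2 2 σ
      = (if (Equiv.swap 0 2 : Fin 3 ≃ Fin 3) i = h then (1:ℝ)/2 else 0)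
        + (if i = h then (1:ℝ)/2 else 0) := by
    have h' : ∀ σ : Fin 3 ≃ Fin 3, q2 2 σ
        = if (if σ = pC then (Equiv.swap 0 2 : Fin 3 ≃ Fin 3) else 1) i = h
            then (if σ = pC ∨ σ = pD then (1:ℝ)/2 else 0) else 0 := by
      intro σ; simp [hq2, qF]
    rw [Finset.sum_congr rfl (fun σ _ => h' σ),
      sum_if_support pC pD (by decide)]
    have hCD : pD ≠ pC := by decide
    simp [hCD]
  rw [e0, e1, e2]
  ring

end AuxGS

/-- Composing doctor-proposing Gale–Shapley with strictly individually
fair hospital preferences does not guarantee fairness: with `|D| = |H| = 3` there exist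
a partition of the doctors into clusters, strict doctor preferences (rank functions
`drk`), independent probabilistic hospital preferences `q h`, each strictly individually
fair, and a map `f` sending every profile in the support of the product distribution
to the doctor-optimal stable matching of that profile, such that the pushforward
allocation of the product distribution under `f` is not PIIF for the proto-metric. -/
theorem doctor_propose_gale_shapley_composition_fails :
    ∃ (c : Fin 3 → Fin 2) (drk : Fin 3 → Fin 3 ≃ Fin 3)
      (q : Fin 3 → (Fin 3 ≃ Fin 3) → ℝ)
      (f : (Fin 3 → Fin 3 ≃ Fin 3) → Fin 3 ≃ Fin 3),
      (∀ h : Fin 3, IsDist (q h)) ∧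
      (∀ h : Fin 3, StrictIF c (q h)) ∧
      (∀ R : Fin 3 → Fin 3 ≃ Fin 3, (∏ h : Fin 3, q h (R h)) ≠ 0 →
        DoctorOptimalStable (fun i h1 h2 => drk i h1 < drk i h2) R (f R)) ∧
      ¬ ClusterPIIF c (fun i h1 h2 => drk i h1 < drk i h2)
          (fun m : Fin 3 ≃ Fin 3 =>
            ∑ R : Fin 3 → Fin 3 ≃ Fin 3,
              if f R = m then ∏ h : Fin 3, q h (R h) else 0) := by
  classical
  refine ⟨![0, 0, 1], drkF, qF, fF, ?_, ?_, ?_, ?_⟩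
  · -- IsDist
    intro h
    constructor
    · intro σ; unfold qF; split_ifs <;> norm_num
    · by_cases h2 : h = 2 <;>
        · simp only [qF, h2, if_true, if_false, reduceIte]
          rw [sum_two _ _ (by decide)]
          norm_num
  · -- StrictIF
    intro h
    constructor
    · intro i j hij k
      fin_cases i <;> fin_cases j <;> simp_all <;>
        by_cases h2 : h = 2 <;>
          · simp only [qF, h2, if_true, if_false, reduceIte]
            rw [sum_if_support _ _ (by decide), sum_if_support _ _ (by decide)]
            simp [pA, pB, pC, pD, Equiv.swap_apply_def, finRotate_succ_apply]
            try ring_nf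
            try rw [add_comm]
    · intro k1 k2 hk
      by_cases h2 : h = 2
      · have hsup : ∀ σ : Fin 3 ≃ Fin 3, qF h σ ≠ 0 → σ = pC ∨ σ = pD :=
          fun σ hσ => (qF_support hσ).1 h2
        fin_cases k1 <;> fin_cases k2 <;> first
          | exact absurd rfl hk
          | · right
              intro σ hσ i j hi hj
              rcases hsup σ hσ with h' | h' <;> subst h' <;> revert i j hi hj <;> decide
          | · left
              intro σ hσ i j hi hj
              rcases hsup σ hσ with h' | h' <;> subst h' <;> revert i j hi hj <;> decide
      · have hsup : ∀ σ : Fin 3 ≃ Fin 3, qF h σ ≠ 0 → σ = pA ∨ σ = pB :=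
          fun σ hσ => (qF_support hσ).2 h2
        fin_cases k1 <;> fin_cases k2 <;> first
          | exact absurd rfl hk
          | · left
              intro σ hσ i j hi hj
              rcases hsup σ hσ with h' | h' <;> subst h' <;> revert i j hi hj <;> decide
          | · right
              intro σ hσ i j hi hj
              rcases hsup σ hσ with h' | h' <;> subst h' <;> revert i j hi hj <;> decide
  · -- DoctorOptimalStable on the support
    intro R hR
    rw [Fin.prod_univ_three] at hR
    have h0 : qF 0 (R 0) ≠ 0 := fun h => by simp [h] at hR
    have h1 : qF 1 (R 1) ≠ 0 := fun h => by simp [h] at hR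
    have h2 : qF 2 (R 2) ≠ 0 := fun h => by simp [h] at hR
    have m0 := (qF_support h0).2 (by decide)
    have m1 := (qF_support h1).2 (by decide)
    have m2 := (qF_support h2).1 rfl
    have hReq : R = ![R 0, R 1, R 2] := by
      funext x; fin_cases x <;> rfl
    rw [hReq]
    rcases m0 with ha | ha <;> rw [ha] <;> rcases m1 with hb | hb <;> rw [hb] <;>
      rcases m2 with hc | hc <;> rw [hc] <;>
        · unfold DoctorOptimalStable StableFor fF drkF; decide
  · -- not ClusterPIIF
    intro hC
    have hcc : (![0, 0, 1] : Fin 3 → Fin 2) 1 = ![0, 0, 1] 0 := rfl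
    have hs := hC 1 0 hcc 2
    have hmem : ∀ x : Fin 3,
        (x ∈ {x : Fin 3 | drkF 1 x < drkF 1 2 ∨ x = 2}) ↔ x = 2 := by
      intro x; fin_cases x <;> simp [drkF, Equiv.swap_apply_def]
    have hind : ∀ (p : Fin 3 → ℝ),
        (∑ h' : Fin 3, Set.indicator {x : Fin 3 | drkF 1 x < drkF 1 2 ∨ x = 2} p h') = p 2 := by
      intro p
      rw [Fin.sum_univ_three]
      rw [Set.indicator_apply, Set.indicator_apply, Set.indicator_apply]
      simp only [hmem]
      norm_num [show ((0:Fin 3) = 2) = False from by decide,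
        show ((1:Fin 3) = 2) = False from by decide]
    rw [hind, hind] at hs
    rw [prospect_eq, prospect_eq, prospect_val, prospect_val] at hs
    norm_num [Equiv.swap_apply_def,
      show ((if (1:Fin 3) = 2 then (0:Fin 3) else 1) = 2) = False from by decide,
      show ((0:Fin 3) = 2) = False from by decide,
      show ((1:Fin 3) = 2) = False from by decide] at hs
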